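/- Let M ≥ N ≥ k+1 ≥ 2 and let J ⊆ {k+2,…,N} with |J| = ℓ ≥ 1 and ℓ ≤ k. Then there exists an F-linear operator A on F[z_1,…,z_M] such that for every polynomial f ∈ F[z_1,…,z_M] that is symmetric in the variables z_1,…,z_N: [Ñ_{k+1}, D_{k+1−ℓ,J}] f = A ( Ñ_{k+1} f ). -/

import Mathlib

open MvPolynomial Finset

section CSDefs

variable {F : Type*} [Field F] [CharZero F]

/-- Exact division in a polynomial ring: `divExact d f = f / d` when `d ∣ f`, junk otherwise. -/
noncomputable def divExact {σ : Type*} (d f : MvPolynomial σ F) : MvPolynomial σ F := by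
  classical exact if h : ∃ c, f = d * c then h.choose else 0

/-- The exchange operator `K_{ij}` permuting the variables `z_i` and `z_j`. -/
noncomputable def Kswap {N : ℕ} (i j : Fin N) (f : MvPolynomial (Fin N) F) :
    MvPolynomial (Fin N) F :=
  rename (Equiv.swap i j) f

/-- The Dunkl operator `∇_i = ∂_i + β ∑_{j ≠ i} (z_i - z_j)⁻¹ (1 - K_{ij})`. -/
noncomputable def nabla {N : ℕ} (β : F) (i : Fin N) (f : MvPolynomial (Fin N) F) :
    MvPolynomial (Fin N) F :=
  pderiv i f + β • ∑ j ∈ Finset.univ.erase i, divExact (X i - X j) (f - Kswap i j f)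

/-- `D_i = z_i ∇_i`. -/
noncomputable def Dop {N : ℕ} (β : F) (i : Fin N) (f : MvPolynomial (Fin N) F) :
    MvPolynomial (Fin N) F :=
  X i * nabla β i f

/-- `(D_{j₁} + kβ)(D_{j₂} + (k+1)β) ⋯` applied along a list of indices. -/
noncomputable def Dlist {N : ℕ} (β : F) :
    ℕ → List (Fin N) → MvPolynomial (Fin N) F → MvPolynomial (Fin N) F
  | _, [], f => f
  | k, j :: rest, f => Dop β j (Dlist β (k + 1) rest f) + ((k : F) * β) • Dlist β (k + 1) rest f

/-- `D_{k,J} = (D_{j₁} + kβ)(D_{j₂} + (k+1)β) ⋯ (D_{j_ℓ} + (k+ℓ-1)β)` for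
`J = {j₁ < j₂ < … < j_ℓ}`. -/
noncomputable def DJ {N : ℕ} (β : F) (k : ℕ) (J : Finset (Fin N))
    (f : MvPolynomial (Fin N) F) : MvPolynomial (Fin N) F :=
  Dlist β k (J.sort (· ≤ ·)) f

/-- `z_J = ∏_{i ∈ J} z_i`. -/
noncomputable def zJ {N : ℕ} (J : Finset (Fin N)) : MvPolynomial (Fin N) F := ∏ i ∈ J, X i

/-- The creation operator `B⁺_{i,J} = ∑_{J' ⊆ J, |J'| = i} z_{J'} D_{1,J'}`. -/
noncomputable def Bplus {N : ℕ} (β : F) (i : ℕ) (J : Finset (Fin N))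
    (f : MvPolynomial (Fin N) F) : MvPolynomial (Fin N) F :=
  ∑ J' ∈ J.powersetCard i, zJ J' * DJ β 1 J' f

/-- `A_{ij} = ((z_i+z_j)/(z_i-z_j))(z_i ∂_i - z_j ∂_j)`. -/
noncomputable def Aop {N : ℕ} (i j : Fin N) (f : MvPolynomial (Fin N) F) :
    MvPolynomial (Fin N) F :=
  divExact (X i - X j) ((X i + X j) * (X i * pderiv i f - X j * pderiv j f))

/-- `H^{(S)} = ∑_{i ∈ S} (z_i ∂_i)² + β ∑_{i<j, i,j ∈ S} A_{ij}`. -/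
noncomputable def Hop {N : ℕ} (β : F) (S : Finset (Fin N)) (f : MvPolynomial (Fin N) F) :
    MvPolynomial (Fin N) F :=
  ∑ i ∈ S, X i * pderiv i (X i * pderiv i f)
    + β • ∑ i ∈ S, ∑ j ∈ S.filter (fun j => i < j), Aop i j f

/-- A polynomial is symmetric in the variables indexed by `S`. -/
def SymmOn {N : ℕ} (S : Finset (Fin N)) (f : MvPolynomial (Fin N) F) : Prop :=
  ∀ i ∈ S, ∀ j ∈ S, rename (Equiv.swap i j) f = f

/-- `phiCS β N lam i = (B⁺_i)^{λ_i - λ_{i+1}} ⋯ (B⁺_1)^{λ_1 - λ_2} · 1`,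
where `lam` is 0-indexed: `lam (j-1) = λ_j`. -/
noncomputable def phiCS (β : F) (N : ℕ) (lam : ℕ → ℕ) : ℕ → MvPolynomial (Fin N) F
  | 0 => 1
  | i + 1 => (fun f => Bplus β (i + 1) Finset.univ f)^[lam i - lam (i + 1)] (phiCS β N lam i)

/-- The monomial symmetric polynomial attached to an exponent vector. -/
noncomputable def msym (N : ℕ) (lam : Fin N → ℕ) : MvPolynomial (Fin N) F := by
  classical
  exact ∑ v ∈ (Finset.univ : Finset (Equiv.Perm (Fin N))).image
      (fun σ => fun i => lam (σ i)), ∏ i, X i ^ v i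

/-- `𝐷̂_i = D_i + β(i-1) - β ∑_{j<i} (1 - K_{ij})` (0-indexed: `i-1` becomes `i`). -/
noncomputable def Dhat {N : ℕ} (β : F) (i : Fin N) (f : MvPolynomial (Fin N) F) :
    MvPolynomial (Fin N) F :=
  Dop β i f + (β * ((i : ℕ) : F)) • f
    - β • ∑ j ∈ Finset.univ.filter (fun j => j < i), (f - Kswap i j f)

end CSDefs
section Lemmas
set_option linter.unusedSectionVars false
variable {F : Type*} [Field F] [CharZero F] {M : ℕ}

local notation "P" => MvPolynomial (Fin M) F

-- divExact API
lemma divExact_eq {d f c : MvPolynomial (Fin M) F} (hd : d ≠ 0) (h : f = d * c) :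
    divExact d f = c := by
  classical
  have hex : ∃ c, f = d * c := ⟨c, h⟩
  rw [divExact]
  simp only [dif_pos hex]
  have := hex.choose_spec
  exact mul_left_cancel₀ hd (by rw [← this, ← h])

lemma divExact_spec {d f : MvPolynomial (Fin M) F} (h : d ∣ f) :
    d * divExact d f = f := by
  obtain ⟨c, rfl⟩ := h
  by_cases hd : d = 0
  · simp [hd]
  · rw [divExact_eq hd rfl]

lemma X_sub_X_ne_zero {i j : Fin M} (h : i ≠ j) : (X i - X j : P) ≠ 0 :=
  sub_ne_zero.mpr ((X_injective (R := F)).ne h)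

lemma Kswap_add {i j : Fin M} (a b : P) :
    Kswap i j (a + b) = Kswap i j a + Kswap i j b := map_add _ _ _

lemma Kswap_smul {i j : Fin M} (c : F) (a : P) :
    Kswap i j (c • a) = c • Kswap i j a := by
  unfold Kswap; exact map_smul (rename (Equiv.swap i j) : MvPolynomial (Fin M) F →ₐ[F] _) c a

lemma Kswap_sub {i j : Fin M} (a b : P) :
    Kswap i j (a - b) = Kswap i j a - Kswap i j b := map_sub _ _ _

lemma Kswap_mul {i j : Fin M} (a b : P) :
    Kswap i j (a * b) = Kswap i j a * Kswap i j b := map_mul _ _ _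

lemma Kswap_X {i j m : Fin M} : Kswap i j (X m : P) = X (Equiv.swap i j m) := rename_X _ _

lemma X_sub_X_dvd_sub_Kswap {i j : Fin M} (hij : i ≠ j) (f : P) :
    (X i - X j) ∣ (f - Kswap i j f) := by
  induction f using MvPolynomial.induction_on with
  | C a => simp [Kswap]
  | add p q hp hq =>
      have : p + q - Kswap i j (p + q) = (p - Kswap i j p) + (q - Kswap i j q) := by
        rw [Kswap_add]; ring
      rw [this]; exact dvd_add hp hq
  | mul_X p m hp =>
      have : p * X m - Kswap i j (p * X m)
          = (p - Kswap i j p) * X m + Kswap i j p * (X m - Kswap i j (X m)) := by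
        rw [Kswap_mul]; ring
      rw [this]
      refine dvd_add (Dvd.dvd.mul_right hp _) (Dvd.dvd.mul_left ?_ _)
      rw [Kswap_X, Equiv.swap_apply_def]
      split_ifs with h1 h2
      · subst h1; exact dvd_refl _
      · rw [h2, show (X i - X j : MvPolynomial (Fin M) F) = -(X j - X i) by ring]
        exact neg_dvd.mpr (dvd_refl _)
      · simp



-- continuing: linearity of nabla/Dop
lemma divExact_add {d a b : MvPolynomial (Fin M) F} (hd : d ≠ 0) (ha : d ∣ a) (hb : d ∣ b) :
    divExact d (a + b) = divExact d a + divExact d b := by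
  apply divExact_eq hd
  rw [mul_add, divExact_spec ha, divExact_spec hb]

lemma divExact_smul {d a : MvPolynomial (Fin M) F} (hd : d ≠ 0) (ha : d ∣ a) (c : F) :
    divExact d (c • a) = c • divExact d a := by
  apply divExact_eq hd
  rw [mul_smul_comm, divExact_spec ha]

lemma nabla_add (β : F) (i : Fin M) (a b : P) :
    nabla β i (a + b) = nabla β i a + nabla β i b := by
  unfold nabla
  rw [map_add]
  have : ∀ j ∈ Finset.univ.erase i,
      divExact (X i - X j) (a + b - Kswap i j (a + b))
        = divExact (X i - X j) (a - Kswap i j a) + divExact (X i - X j) (b - Kswap i j b) := by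
    intro j hj
    have hij : i ≠ j := (Finset.ne_of_mem_erase hj).symm
    rw [show a + b - Kswap i j (a + b) = (a - Kswap i j a) + (b - Kswap i j b) by
      rw [Kswap_add]; ring]
    exact divExact_add (X_sub_X_ne_zero hij) (X_sub_X_dvd_sub_Kswap hij a)
      (X_sub_X_dvd_sub_Kswap hij b)
  rw [Finset.sum_congr rfl this, Finset.sum_add_distrib, smul_add]
  ring

lemma nabla_smul (β : F) (i : Fin M) (c : F) (a : P) :
    nabla β i (c • a) = c • nabla β i a := by
  unfold nabla
  rw [(pderiv i).map_smul]
  have : ∀ j ∈ Finset.univ.erase i,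
      divExact (X i - X j) (c • a - Kswap i j (c • a))
        = c • divExact (X i - X j) (a - Kswap i j a) := by
    intro j hj
    have hij : i ≠ j := (Finset.ne_of_mem_erase hj).symm
    rw [show c • a - Kswap i j (c • a) = c • (a - Kswap i j a) by rw [Kswap_smul]; module]
    exact divExact_smul (X_sub_X_ne_zero hij) (X_sub_X_dvd_sub_Kswap hij a) c
  rw [Finset.sum_congr rfl this, ← Finset.smul_sum, smul_add, smul_comm]

lemma Dop_add (β : F) (i : Fin M) (a b : P) :
    Dop β i (a + b) = Dop β i a + Dop β i b := by
  unfold Dop; rw [nabla_add, mul_add]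

lemma Dop_smul (β : F) (i : Fin M) (c : F) (a : P) :
    Dop β i (c • a) = c • Dop β i a := by
  unfold Dop; rw [nabla_smul, mul_smul_comm]

noncomputable def DopL (β : F) (i : Fin M) : P →ₗ[F] P where
  toFun := Dop β i
  map_add' := Dop_add β i
  map_smul' := Dop_smul β i

noncomputable def KswapL (i j : Fin M) : P →ₗ[F] P :=
  (rename (Equiv.swap i j) : MvPolynomial (Fin M) F →ₐ[F] MvPolynomial (Fin M) F).toLinearMap

@[simp] lemma DopL_apply (β : F) (i : Fin M) (f : P) : DopL β i f = Dop β i f := rfl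
@[simp] lemma KswapL_apply (i j : Fin M) (f : P) : KswapL i j f = Kswap i j f := rfl

noncomputable def QL (β : F) (c : ℕ) (j : Fin M) : P →ₗ[F] P :=
  DopL β j + ((c : F) * β) • LinearMap.id

lemma QL_apply (β : F) (c : ℕ) (j : Fin M) (f : P) :
    QL β c j f = Dop β j f + ((c : F) * β) • f := rfl

noncomputable def DlistL (β : F) : ℕ → List (Fin M) → (P →ₗ[F] P)
  | _, [] => LinearMap.id
  | c, j :: rest => (QL β c j).comp (DlistL β (c + 1) rest)

lemma DlistL_apply (β : F) (c : ℕ) (L : List (Fin M)) (f : P) :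
    DlistL β c L f = Dlist β c L f := by
  induction L generalizing c with
  | nil => rfl
  | cons j rest ih =>
      show QL β c j (DlistL β (c+1) rest f) = _
      rw [QL_apply, ih, Dlist]

-- product relations
lemma divExact_zero {d : MvPolynomial (Fin M) F} (hd : d ≠ 0) : divExact d 0 = 0 :=
  divExact_eq hd (mul_zero d).symm

lemma Kswap_C {i j : Fin M} (a : F) : Kswap i j (C a : P) = C a := rename_C _ _

lemma nabla_C (β : F) (i : Fin M) (a : F) : nabla β i (C a : P) = 0 := by
  unfold nabla
  rw [pderiv_C]
  have : ∀ j ∈ Finset.univ.erase i,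
      divExact (X i - X j) ((C a : P) - Kswap i j (C a)) = 0 := by
    intro j hj
    have hij : i ≠ j := (Finset.ne_of_mem_erase hj).symm
    rw [Kswap_C, sub_self]
    exact divExact_zero (X_sub_X_ne_zero hij)
  rw [Finset.sum_congr rfl this]
  simp

lemma nabla_X_mul_ne (β : F) {i j : Fin M} (hji : j ≠ i) (g : P) :
    nabla β i (X j * g) = X j * nabla β i g - β • Kswap i j g := by
  unfold nabla
  have hpd : pderiv i (X j * g) = X j * pderiv i g := by
    rw [pderiv_mul, pderiv_X, Pi.single_apply, if_neg hji]; ring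
  have hij : i ≠ j := hji.symm
  have hjmem : j ∈ Finset.univ.erase i := Finset.mem_erase.mpr ⟨hji, Finset.mem_univ j⟩
  have hterm : ∀ m ∈ Finset.univ.erase i,
      divExact (X i - X m) (X j * g - Kswap i m (X j * g))
        = X j * divExact (X i - X m) (g - Kswap i m g)
            - (if m = j then Kswap i m g else 0) := by
    intro m hm
    have him : i ≠ m := (Finset.ne_of_mem_erase hm).symm
    have hd : (X i - X m : P) ≠ 0 := X_sub_X_ne_zero him
    have hdvd := X_sub_X_dvd_sub_Kswap him g
    rw [Kswap_mul, Kswap_X]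
    split_ifs with hmj
    · subst hmj
      rw [Equiv.swap_apply_right]
      apply divExact_eq hd
      rw [mul_sub, mul_comm (X i - X m) (X m * _), mul_assoc, mul_comm _ (X i - X m),
        divExact_spec hdvd]
      ring
    · rw [Equiv.swap_apply_of_ne_of_ne hji (Ne.symm hmj), sub_zero]
      apply divExact_eq hd
      rw [mul_comm (X i - X m) (X j * _), mul_assoc, mul_comm _ (X i - X m), divExact_spec hdvd]
      ring
  rw [Finset.sum_congr rfl hterm, Finset.sum_sub_distrib, Finset.sum_ite_eq' (Finset.univ.erase i) j
      (fun m => Kswap i m g), if_pos hjmem, ← Finset.mul_sum, hpd]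
  rw [mul_add, mul_smul_comm]
  module

lemma nabla_X_mul_self (β : F) (i : Fin M) (g : P) :
    nabla β i (X i * g)
      = X i * nabla β i g + g + β • ∑ m ∈ Finset.univ.erase i, Kswap i m g := by
  unfold nabla
  have hpd : pderiv i (X i * g) = g + X i * pderiv i g := by
    rw [pderiv_mul, pderiv_X, Pi.single_apply, if_pos rfl]; ring
  have hterm : ∀ m ∈ Finset.univ.erase i,
      divExact (X i - X m) (X i * g - Kswap i m (X i * g))
        = X i * divExact (X i - X m) (g - Kswap i m g) + Kswap i m g := by
    intro m hm
    have him : i ≠ m := (Finset.ne_of_mem_erase hm).symm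
    have hd : (X i - X m : P) ≠ 0 := X_sub_X_ne_zero him
    have hdvd := X_sub_X_dvd_sub_Kswap him g
    rw [Kswap_mul, Kswap_X, Equiv.swap_apply_left]
    apply divExact_eq hd
    rw [mul_add, mul_comm (X i - X m) (X i * _), mul_assoc, mul_comm _ (X i - X m),
      divExact_spec hdvd]
    ring
  rw [Finset.sum_congr rfl hterm, Finset.sum_add_distrib, ← Finset.mul_sum, hpd]
  rw [mul_add, mul_smul_comm]
  module

-- equivariance under permutations
lemma swap_perm_apply (σ : Equiv.Perm (Fin M)) (i j x : Fin M) :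
    σ (Equiv.swap i j x) = Equiv.swap (σ i) (σ j) (σ x) := by
  rw [Equiv.swap_apply_apply]
  simp

lemma rename_Kswap (σ : Equiv.Perm (Fin M)) (i j : Fin M) (f : P) :
    rename σ (Kswap i j f) = Kswap (σ i) (σ j) (rename σ f) := by
  unfold Kswap
  rw [rename_rename, rename_rename]
  have : (⇑σ ∘ ⇑(Equiv.swap i j)) = (⇑(Equiv.swap (σ i) (σ j)) ∘ ⇑σ) := by
    funext x
    exact swap_perm_apply σ i j x
  rw [this]

lemma rename_divExact (σ : Equiv.Perm (Fin M)) {d g : MvPolynomial (Fin M) F} (hd : d ≠ 0)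
    (hdvd : d ∣ g) : rename σ (divExact d g) = divExact (rename σ d) (rename σ g) := by
  have hinj : Function.Injective (rename (R := F) σ) :=
    rename_injective σ σ.injective
  have hd' : rename σ d ≠ 0 := fun h => hd (by
    apply hinj; rw [h, map_zero])
  symm
  apply divExact_eq hd'
  rw [← map_mul, divExact_spec hdvd]

lemma rename_nabla (σ : Equiv.Perm (Fin M)) (β : F) (i : Fin M) (f : P) :
    rename σ (nabla β i f) = nabla β (σ i) (rename σ f) := by
  unfold nabla
  rw [map_add]
  have hsm : rename σ (β • ∑ j ∈ Finset.univ.erase i, divExact (X i - X j) (f - Kswap i j f))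
      = β • ∑ j ∈ Finset.univ.erase i, rename σ (divExact (X i - X j) (f - Kswap i j f)) := by
    rw [map_smul (rename (σ : Fin M → Fin M) : MvPolynomial (Fin M) F →ₐ[F] _), map_sum]
  rw [hsm, pderiv_rename σ.injective]
  congr 1
  congr 1
  rw [Finset.sum_bij (fun j _ => σ j)]
  · intro j hj
    rw [Finset.mem_erase] at hj ⊢
    exact ⟨fun h => hj.1 (σ.injective h), Finset.mem_univ _⟩
  · intro a ha b hb h
    exact σ.injective h
  · intro b hb
    rw [Finset.mem_erase] at hb
    refine ⟨σ.symm b, Finset.mem_erase.mpr ⟨fun h => hb.1 ?_, Finset.mem_univ _⟩, by simp⟩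
    rw [← h]; simp
  · intro j hj
    have hij : i ≠ j := (Finset.ne_of_mem_erase hj).symm
    rw [rename_divExact σ (X_sub_X_ne_zero hij) (X_sub_X_dvd_sub_Kswap hij f), map_sub,
      map_sub, rename_Kswap, rename_X, rename_X]

lemma rename_Dop (σ : Equiv.Perm (Fin M)) (β : F) (i : Fin M) (f : P) :
    rename σ (Dop β i f) = Dop β (σ i) (rename σ f) := by
  unfold Dop
  rw [map_mul, rename_X, rename_nabla]

lemma Kswap_Dop (i j m : Fin M) (β : F) (f : P) :
    Kswap i j (Dop β m f) = Dop β (Equiv.swap i j m) (Kswap i j f) :=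
  rename_Dop (Equiv.swap i j) β m f

lemma Kswap_Dop_ne {i j m : Fin M} (him : m ≠ i) (hjm : m ≠ j) (β : F) (f : P) :
    Kswap i j (Dop β m f) = Dop β m (Kswap i j f) := by
  rw [Kswap_Dop, Equiv.swap_apply_of_ne_of_ne him hjm]

lemma Kswap_Dop_left (i j : Fin M) (β : F) (f : P) :
    Kswap i j (Dop β i f) = Dop β j (Kswap i j f) := by
  rw [Kswap_Dop, Equiv.swap_apply_left]

lemma Kswap_Dop_right (i j : Fin M) (β : F) (f : P) :
    Kswap i j (Dop β j f) = Dop β i (Kswap i j f) := by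
  rw [Kswap_Dop, Equiv.swap_apply_right]

noncomputable def nablaL (β : F) (i : Fin M) : P →ₗ[F] P where
  toFun := nabla β i
  map_add' := nabla_add β i
  map_smul' := nabla_smul β i

@[simp] lemma nablaL_apply (β : F) (i : Fin M) (f : P) : nablaL β i f = nabla β i f := rfl

lemma nabla_sub (β : F) (i : Fin M) (a b : P) :
    nabla β i (a - b) = nabla β i a - nabla β i b := map_sub (nablaL β i) a b

lemma nabla_zero (β : F) (i : Fin M) : nabla β i (0 : P) = 0 := map_zero (nablaL β i)

lemma nabla_sum (β : F) (i : Fin M) {α : Type*} (s : Finset α) (g : α → P) :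
    nabla β i (∑ m ∈ s, g m) = ∑ m ∈ s, nabla β i (g m) := map_sum (nablaL β i) g s

lemma Kswap_comm (i j : Fin M) (f : P) : Kswap i j f = Kswap j i f := by
  unfold Kswap; rw [Equiv.swap_comm]

lemma Kswap_nabla (i j x : Fin M) (β : F) (f : P) :
    Kswap i j (nabla β x f) = nabla β (Equiv.swap i j x) (Kswap i j f) :=
  rename_nabla (Equiv.swap i j) β x f

lemma nabla_Kswap (β : F) (i j x : Fin M) (f : P) :
    nabla β x (Kswap i j f) = Kswap i j (nabla β (Equiv.swap i j x) f) := by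
  have := (Kswap_nabla i j (Equiv.swap i j x) β f).symm
  rwa [Equiv.swap_apply_self] at this

lemma nabla_comm_self (β : F) {i j : Fin M} (hij : i ≠ j) (p : P)
    (IH : nabla β i (nabla β j p) = nabla β j (nabla β i p)) :
    nabla β i (nabla β j (X i * p)) = nabla β j (nabla β i (X i * p)) := by
  have hji : j ≠ i := hij.symm
  have hjmem : j ∈ Finset.univ.erase i := Finset.mem_erase.mpr ⟨hji, Finset.mem_univ j⟩
  have e1 : nabla β i (nabla β j (X i * p))
      = X i * nabla β i (nabla β j p) + nabla β j p
        + β • ∑ m ∈ (Finset.univ.erase i).erase j, Kswap i m (nabla β j p) := by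
    rw [nabla_X_mul_ne β hij p, nabla_sub, nabla_smul, nabla_X_mul_self,
      Kswap_comm j i, nabla_Kswap β i j i, Equiv.swap_apply_left,
      ← Finset.add_sum_erase _ _ hjmem]
    module
  have e2 : nabla β j (nabla β i (X i * p))
      = X i * nabla β j (nabla β i p) + nabla β j p
        + β • ∑ m ∈ (Finset.univ.erase i).erase j, Kswap i m (nabla β j p) := by
    rw [nabla_X_mul_self β i p, nabla_add, nabla_add, nabla_X_mul_ne β hij, nabla_smul,
      nabla_sum, ← Finset.add_sum_erase _ _ hjmem,
      nabla_Kswap β i j j, Equiv.swap_apply_right]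
    rw [Finset.sum_congr rfl (fun m hm => ?_), Kswap_comm j i]
    · module
    · have hmj : m ≠ j := (Finset.mem_erase.mp hm).1
      have hmi : m ≠ i := (Finset.mem_erase.mp (Finset.mem_erase.mp hm).2).1
      rw [nabla_Kswap β i m j, Equiv.swap_apply_of_ne_of_ne hji (Ne.symm hmj)]
  rw [e1, e2, IH]

lemma nabla_comm_ne (β : F) {i j m : Fin M} (hij : i ≠ j) (hmi : m ≠ i) (hmj : m ≠ j) (p : P)
    (IH : nabla β i (nabla β j p) = nabla β j (nabla β i p)) :
    nabla β i (nabla β j (X m * p)) = nabla β j (nabla β i (X m * p)) := by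
  rw [nabla_X_mul_ne β hmj p, nabla_sub, nabla_smul, nabla_X_mul_ne β hmi,
    nabla_Kswap β j m i, Equiv.swap_apply_of_ne_of_ne hij (Ne.symm hmi),
    nabla_X_mul_ne β hmi p, nabla_sub, nabla_smul, nabla_X_mul_ne β hmj,
    nabla_Kswap β i m j, Equiv.swap_apply_of_ne_of_ne (Ne.symm hij) (Ne.symm hmj), IH]
  module

lemma nabla_comm (β : F) {i j : Fin M} (hij : i ≠ j) (f : P) :
    nabla β i (nabla β j f) = nabla β j (nabla β i f) := by
  induction f using MvPolynomial.induction_on with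
  | C a => rw [nabla_C, nabla_C, nabla_zero, nabla_zero]
  | add p q hp hq => rw [nabla_add, nabla_add, nabla_add, nabla_add, hp, hq]
  | mul_X p m hp =>
      rw [mul_comm]
      by_cases hmi : m = i
      · subst hmi; exact nabla_comm_self β hij p hp
      · by_cases hmj : m = j
        · subst hmj; exact (nabla_comm_self β (Ne.symm hij) p hp.symm).symm
        · exact nabla_comm_ne β hij hmi hmj p hp

lemma Dop_comm (β : F) {i j : Fin M} (hij : i ≠ j) (h : P) :
    Dop β i (Dop β j h) - Dop β j (Dop β i h)
      = β • (Kswap i j (Dop β i h) - Kswap i j (Dop β j h)) := by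
  unfold Dop
  rw [nabla_X_mul_ne β hij.symm (nabla β j h), nabla_X_mul_ne β hij (nabla β i h),
    Kswap_mul, Kswap_mul, Kswap_X, Kswap_X, Equiv.swap_apply_left, Equiv.swap_apply_right,
    nabla_comm β hij h, Kswap_comm j i]
  simp only [smul_eq_C_mul]
  ring

lemma Dop_comm_inv (β : F) {i j : Fin M} (hij : i ≠ j) (h : P) (hinv : Kswap i j h = h) :
    Dop β i (Dop β j h) - Dop β j (Dop β i h) = β • (Dop β j h - Dop β i h) := by
  rw [Dop_comm β hij h, Kswap_Dop_left, Kswap_Dop_right, hinv]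

lemma Kswap_Dlist {i j : Fin M} (β : F) (c : ℕ) (R : List (Fin M))
    (hm : ∀ m ∈ R, m ≠ i ∧ m ≠ j) (f : P) (hf : Kswap i j f = f) :
    Kswap i j (Dlist β c R f) = Dlist β c R f := by
  induction R generalizing c with
  | nil => exact hf
  | cons m T ih =>
      have h1 := hm m (List.mem_cons_self (a := m) (l := T))
      rw [Dlist, Kswap_add, Kswap_smul, Kswap_Dop_ne h1.1 h1.2,
        ih (c+1) (fun x hx => hm x (List.mem_cons_of_mem m hx))]

lemma Kswap_DlistL {i j : Fin M} (β : F) (c : ℕ) (R : List (Fin M))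
    (hm : ∀ m ∈ R, m ≠ i ∧ m ≠ j) (f : P) (hf : Kswap i j f = f) :
    Kswap i j (DlistL β c R f) = DlistL β c R f := by
  rw [DlistL_apply]; exact Kswap_Dlist β c R hm f hf

lemma Kswap_QL {i j m : Fin M} (him : m ≠ i) (hjm : m ≠ j) (β : F) (c : ℕ) (f : P) :
    Kswap i j (QL β c m f) = QL β c m (Kswap i j f) := by
  rw [QL_apply, QL_apply, Kswap_add, Kswap_smul, Kswap_Dop_ne him hjm]

lemma single_comm (β : F) (c : ℕ) (j : Fin M) (L₀ : List (Fin M)) (c₀ : ℕ)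
    (hj : j ∉ L₀) (hnd : L₀.Nodup) (g : MvPolynomial (Fin M) F)
    (hg : ∀ i ∈ L₀, Kswap i j g = g) :
    DlistL β c₀ L₀ (QL β c j g) - QL β c j (DlistL β c₀ L₀ g)
      = β • (L₀.map (fun i => Kswap i j (DlistL β c₀ L₀ g) - DlistL β c₀ L₀ g)).sum := by
  induction L₀ generalizing c₀ with
  | nil => simp [DlistL]
  | cons i T ih =>
      have hji : j ≠ i := fun h => hj (h ▸ List.mem_cons_self (a := i) (l := T))
      have hjT : j ∉ T := fun h => hj (List.mem_cons_of_mem i h)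
      have hiT : i ∉ T := (List.nodup_cons.mp hnd).1
      have hndT : T.Nodup := (List.nodup_cons.mp hnd).2
      have hgT : ∀ i' ∈ T, Kswap i' j g = g :=
        fun i' hi' => hg i' (List.mem_cons_of_mem i hi')
      set A := QL β c₀ i with hA
      set B := DlistL β (c₀ + 1) T with hB
      set Q := QL β c j with hQ
      have hDL : ∀ x : MvPolynomial (Fin M) F, DlistL β c₀ (i :: T) x = A (B x) := fun x => rfl
      simp only [hDL]
      set h := B g with hh
      have hKh : Kswap i j h = h := by
        rw [hh]
        exact Kswap_DlistL β (c₀+1) T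
          (fun m hm => ⟨fun he => hiT (by rwa [he] at hm), fun he => hjT (by rwa [he] at hm)⟩) g
          (hg i (List.mem_cons_self (a := i) (l := T)))
      have IH := ih (c₀ + 1) hjT hndT hgT
      have hBQ : B (Q g) = Q h + β • (T.map (fun i' => Kswap i' j h - h)).sum := by
        rw [← IH]; module
      have hbracket : A (Q h) - Q (A h) = β • (Dop β j h - Dop β i h) := by
        have : A (Q h) - Q (A h) = Dop β i (Dop β j h) - Dop β j (Dop β i h) := by
          rw [hA, hQ, QL_apply, QL_apply, QL_apply, QL_apply, Dop_add, Dop_add,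
            Dop_smul, Dop_smul]
          module
        rw [this]
        exact Dop_comm_inv β hji.symm h hKh
      have hhead : Kswap i j (A h) - A h = Dop β j h - Dop β i h := by
        rw [hA, QL_apply, Kswap_add, Kswap_smul, Kswap_Dop_left, hKh]
        module
      have htail : A ((T.map (fun i' => Kswap i' j h - h)).sum)
          = (T.map (fun i' => Kswap i' j (A h) - A h)).sum := by
        rw [map_list_sum, List.map_map]
        congr 1
        refine List.map_congr_left (fun i' hi' => ?_)
        have hii' : i ≠ i' := fun he => hiT (he ▸ hi')
        show A (Kswap i' j h - h) = _
        rw [map_sub, hA, QL_apply, QL_apply, Kswap_add, Kswap_smul,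
          Kswap_Dop_ne hii' (Ne.symm hji)]
      rw [hBQ, map_add, map_smul, htail]
      have expand : (((i :: T).map fun i' => Kswap i' j (A h) - A h).sum)
          = (Kswap i j (A h) - A h) + (T.map (fun i' => Kswap i' j (A h) - A h)).sum := rfl
      rw [expand, hhead]
      have : A (Q h) = Q (A h) + β • (Dop β j h - Dop β i h) := by rw [← hbracket]; module
      rw [this]
      module

lemma list_sum_apply {α : Type*} (l : List α) (φ : α → (P →ₗ[F] P)) (x : P) :
    (l.map φ).sum x = (l.map (fun a => φ a x)).sum := by
  induction l with
  | nil => simp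
  | cons a T ih => simp [ih]

lemma main_comm (β : F) (L₀ : List (Fin M)) (h₀ : L₀.Nodup) (c₀ : ℕ)
    (L : List (Fin M)) (c : ℕ) (hL : L.Nodup) (hd : ∀ j ∈ L, j ∉ L₀) :
    ∃ A : MvPolynomial (Fin M) F →ₗ[F] MvPolynomial (Fin M) F,
      ∀ f : MvPolynomial (Fin M) F, (∀ i ∈ L₀, ∀ j ∈ L, Kswap i j f = f) →
        DlistL β c₀ L₀ (DlistL β c L f) - DlistL β c L (DlistL β c₀ L₀ f)
          = A (DlistL β c₀ L₀ f) := by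
  induction L generalizing c with
  | nil =>
      exact ⟨0, fun f _ => by simp [DlistL]⟩
  | cons j R ih =>
      have hjL₀ : j ∉ L₀ := hd j (List.mem_cons_self (a := j) (l := R))
      have hRL₀ : ∀ m ∈ R, m ∉ L₀ := fun m hm => hd m (List.mem_cons_of_mem j hm)
      have hjR : j ∉ R := (List.nodup_cons.mp hL).1
      have hndR : R.Nodup := (List.nodup_cons.mp hL).2
      obtain ⟨A_R, hA_R⟩ := ih (c + 1) hndR hRL₀
      set P₀ := DlistL β c₀ L₀ with hP₀
      set Rop := DlistL β (c + 1) R with hRop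
      set Q := QL β c j with hQ
      refine ⟨β • ((L₀.map (fun i =>
          ((KswapL i j - LinearMap.id : MvPolynomial (Fin M) F →ₗ[F] MvPolynomial (Fin M) F)).comp (Rop + A_R))).sum) + Q.comp A_R,
        fun f hf => ?_⟩
      have hDL : ∀ x : MvPolynomial (Fin M) F, DlistL β c (j :: R) x = Q (Rop x) :=
        fun x => rfl
      simp only [hDL]
      have hsymg : ∀ i ∈ L₀, Kswap i j (Rop f) = Rop f := by
        intro i hi
        refine Kswap_DlistL β (c+1) R (fun m hm => ⟨fun he => hRL₀ m hm (he ▸ hi), ?_⟩)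
          f (hf i hi j (List.mem_cons_self (a := j) (l := R)))
        exact fun he => hjR (he ▸ hm)
      have hsingle := single_comm β c j L₀ c₀ hjL₀ h₀ (Rop f) hsymg
      have hIHf : P₀ (Rop f) = Rop (P₀ f) + A_R (P₀ f) := by
        have := hA_R f (fun i hi j' hj' => hf i hi j' (List.mem_cons_of_mem j hj'))
        rw [← this]; module
      have key : P₀ (Q (Rop f)) - Q (Rop (P₀ f))
          = β • (L₀.map (fun i => Kswap i j (P₀ (Rop f)) - P₀ (Rop f))).sum
            + Q (A_R (P₀ f)) := by
        rw [← hsingle, hIHf, map_add]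
        module
      rw [key]
      rw [LinearMap.add_apply, LinearMap.smul_apply, LinearMap.comp_apply,
        list_sum_apply]
      congr 1
      have hmc : (L₀.map (fun i => Kswap i j (P₀ (Rop f)) - P₀ (Rop f)))
          = (L₀.map (fun a => ((KswapL a j - LinearMap.id :
              MvPolynomial (Fin M) F →ₗ[F] MvPolynomial (Fin M) F) ∘ₗ (Rop + A_R)) (P₀ f))) := by
        refine List.map_congr_left (fun i hi => ?_)
        rw [hIHf]
        simp [LinearMap.sub_apply, LinearMap.add_apply]
      rw [hmc]

end Lemmas

/-- for `M ≥ N ≥ k+1 ≥ 2` and `J ⊆ {k+2,…,N}` with `|J| = ℓ`, `1 ≤ ℓ ≤ k`,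
there is a linear operator `A` with `[Ñ_{k+1}, D_{k+1-ℓ,J}] f = A (Ñ_{k+1} f)` for every
`f` symmetric in `z_1,…,z_N`. (0-indexed: `{k+2,…,N}` is `{x | k+1 ≤ x < N}`.) -/
theorem statement_13 {F : Type*} [Field F] [CharZero F] {M N : ℕ} (β : F) (k l : ℕ)
    (hk : 2 ≤ k + 1) (hkN : k + 1 ≤ N) (hNM : N ≤ M)
    (J : Finset (Fin M))
    (hJsub : J ⊆ Finset.univ.filter (fun x : Fin M => k + 1 ≤ (x : ℕ) ∧ (x : ℕ) < N))
    (hJcard : J.card = l) (hl1 : 1 ≤ l) (hlk : l ≤ k) :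
    ∃ A : MvPolynomial (Fin M) F →ₗ[F] MvPolynomial (Fin M) F,
      ∀ f : MvPolynomial (Fin M) F,
        SymmOn (Finset.univ.filter (fun x : Fin M => (x : ℕ) < N)) f →
        DJ β 0 (Finset.univ.filter (fun x : Fin M => (x : ℕ) < k + 1)) (DJ β (k + 1 - l) J f)
          - DJ β (k + 1 - l) J
              (DJ β 0 (Finset.univ.filter (fun x : Fin M => (x : ℕ) < k + 1)) f)
        = A (DJ β 0 (Finset.univ.filter (fun x : Fin M => (x : ℕ) < k + 1)) f) := by
  classical
  set S₀ : Finset (Fin M) := Finset.univ.filter (fun x : Fin M => (x : ℕ) < k + 1) with hS₀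
  set L₀ : List (Fin M) := S₀.sort (· ≤ ·) with hL₀
  set L : List (Fin M) := J.sort (· ≤ ·) with hLdef
  have h₀ : L₀.Nodup := Finset.sort_nodup _ _
  have hLnd : L.Nodup := Finset.sort_nodup _ _
  have hd : ∀ j ∈ L, j ∉ L₀ := by
    intro j hj hjL₀
    have hjJ : j ∈ J := (Finset.mem_sort _).mp hj
    have hjk : k + 1 ≤ (j : ℕ) := ((Finset.mem_filter.mp (hJsub hjJ)).2).1
    have hjS₀ : j ∈ S₀ := (Finset.mem_sort _).mp hjL₀
    have : (j : ℕ) < k + 1 := (Finset.mem_filter.mp hjS₀).2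
    omega
  obtain ⟨A, hA⟩ := main_comm β L₀ h₀ 0 L (k + 1 - l) hLnd hd
  refine ⟨A, fun f hf => ?_⟩
  have hyp : ∀ i ∈ L₀, ∀ j ∈ L, Kswap i j f = f := by
    intro i hi j hj
    have hiS₀ : i ∈ S₀ := (Finset.mem_sort _).mp hi
    have hik : (i : ℕ) < k + 1 := (Finset.mem_filter.mp hiS₀).2
    have hjJ : j ∈ J := (Finset.mem_sort _).mp hj
    have hjN : (j : ℕ) < N := ((Finset.mem_filter.mp (hJsub hjJ)).2).2
    exact hf i (Finset.mem_filter.mpr ⟨Finset.mem_univ i, by omega⟩)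
      j (Finset.mem_filter.mpr ⟨Finset.mem_univ j, hjN⟩)
  have := hA f hyp
  simp only [DlistL_apply] at this
  exact this
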